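/- Let a > 0 and let f : ℝ → ℝ be continuously differentiable with (f'(x))² < 16π²a² for all x ∈ ℝ. Define F : ℝ → ℝ by F(x) = exp(f(x)/2)/(2πa), and let X : ℝ → ℝ be differentiable with X'(x) = exp(f(x)/2)·√(1 − (f'(x))²/(16π²a²)) for all x. Define Φ : ℝ² → ℝ³ by Φ(x, y) = (X(x), F(x)·sin(2πa y), F(x)·cos(2πa y)). Then for every (x, y) ∈ ℝ² the total derivative DΦ(x, y) : ℝ² → ℝ³ satisfies ‖DΦ(x, y)(v)‖ = exp(f(x)/2)·‖v‖ for all v ∈ ℝ²; that is, Φ pulls back the Euclidean metric of ℝ³ to the conformal metric e^{f(x)}(dx² + dy²), and X is strictly increasing. -/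

import Mathlib

open Real

/-- The map `Φ(x,y) = (X(x), F(x) sin(2πay), F(x) cos(2πay))`, with
`F(x) = e^{f(x)/2}/(2πa)` and `X' = e^{f/2}·√(1 − (f')²/(16π²a²))`, is an
isometric immersion pulling back the Euclidean metric of `ℝ³` to the
conformal metric `e^{f(x)}(dx² + dy²)`; moreover `X` is strictly increasing. -/
theorem cylinder_isometric_embedding
    (a : ℝ) (ha : 0 < a)
    (f : ℝ → ℝ) (hf : ContDiff ℝ 1 f)
    (hbound : ∀ x, (deriv f x) ^ 2 < 16 * π ^ 2 * a ^ 2)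
    (F X : ℝ → ℝ)
    (hF : ∀ x, F x = Real.exp (f x / 2) / (2 * π * a))
    (hX : ∀ x, HasDerivAt X
      (Real.exp (f x / 2) * Real.sqrt (1 - (deriv f x) ^ 2 / (16 * π ^ 2 * a ^ 2))) x)
    (Φ : EuclideanSpace ℝ (Fin 2) → EuclideanSpace ℝ (Fin 3))
    (hΦ : ∀ p, Φ p = (WithLp.equiv 2 (Fin 3 → ℝ)).symm
      ![X (p 0), F (p 0) * Real.sin (2 * π * a * p 1),
        F (p 0) * Real.cos (2 * π * a * p 1)]) :
    (∀ p : EuclideanSpace ℝ (Fin 2), DifferentiableAt ℝ Φ p ∧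
      ∀ v : EuclideanSpace ℝ (Fin 2),
        ‖fderiv ℝ Φ p v‖ = Real.exp (f (p 0) / 2) * ‖v‖) ∧
      StrictMono X := by
  have hπ : (0:ℝ) < π := Real.pi_pos
  have hK : (0:ℝ) < 16 * π ^ 2 * a ^ 2 := by positivity
  have hsub : ∀ x, 0 < 1 - (deriv f x) ^ 2 / (16 * π ^ 2 * a ^ 2) := by
    intro x
    rw [sub_pos, div_lt_one hK]
    exact hbound x
  -- strict monotonicity of X
  have hXmono : StrictMono X := by
    have hXdiff : Differentiable ℝ X := fun x => (hX x).differentiableAt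
    apply strictMono_of_deriv_pos
    intro x
    rw [(hX x).deriv]
    have h1 : 0 < Real.sqrt (1 - (deriv f x) ^ 2 / (16 * π ^ 2 * a ^ 2)) :=
      Real.sqrt_pos.2 (hsub x)
    positivity
  refine ⟨?_, hXmono⟩
  intro p
  -- notation
  set x := p 0 with hx
  set y := p 1 with hy
  have hfd : HasDerivAt f (deriv f x) x :=
    ((hf.differentiable one_ne_zero) x).hasDerivAt
  have hE : HasDerivAt (fun t => Real.exp (f t / 2))
      (Real.exp (f x / 2) * (deriv f x / 2)) x := (hfd.div_const 2).exp
  have hFd : HasDerivAt F (Real.exp (f x / 2) * (deriv f x / 2) / (2 * π * a)) x := by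
    have := hE.div_const (2 * π * a)
    exact this.congr_of_eventuallyEq (Filter.Eventually.of_forall hF)
  -- projections
  set P0 : EuclideanSpace ℝ (Fin 2) →L[ℝ] ℝ := EuclideanSpace.proj 0 with hP0
  set P1 : EuclideanSpace ℝ (Fin 2) →L[ℝ] ℝ := EuclideanSpace.proj 1 with hP1
  have hp0 : HasFDerivAt (fun q : EuclideanSpace ℝ (Fin 2) => q 0) P0 p :=
    P0.hasFDerivAt
  have hp1 : HasFDerivAt (fun q : EuclideanSpace ℝ (Fin 2) => q 1) P1 p :=
    P1.hasFDerivAt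
  -- abbreviations for values at p
  set D := deriv f x with hD
  set E := Real.exp (f x / 2) with hEdef
  set s := Real.sqrt (1 - D ^ 2 / (16 * π ^ 2 * a ^ 2)) with hs
  set θ := 2 * π * a * y with hθ
  -- component derivatives
  have h0 : HasFDerivAt (fun q : EuclideanSpace ℝ (Fin 2) => X (q 0))
      ((E * s) • P0) p := (hX x).comp_hasFDerivAt p hp0
  have hFcomp : HasFDerivAt (fun q : EuclideanSpace ℝ (Fin 2) => F (q 0))
      ((E * (D / 2) / (2 * π * a)) • P0) p := hFd.comp_hasFDerivAt p hp0
  have hθcomp : HasFDerivAt (fun q : EuclideanSpace ℝ (Fin 2) => 2 * π * a * q 1)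
      ((2 * π * a) • P1) p := hp1.const_mul (2 * π * a)
  have hsin : HasFDerivAt (fun q : EuclideanSpace ℝ (Fin 2) => Real.sin (2 * π * a * q 1))
      (Real.cos θ • ((2 * π * a) • P1)) p :=
    by have := (Real.hasDerivAt_sin θ).comp_hasFDerivAt p hθcomp; exact this
  have hcos : HasFDerivAt (fun q : EuclideanSpace ℝ (Fin 2) => Real.cos (2 * π * a * q 1))
      ((-Real.sin θ) • ((2 * π * a) • P1)) p :=
    by have := (Real.hasDerivAt_cos θ).comp_hasFDerivAt p hθcomp; exact this
  have h1 : HasFDerivAt (fun q : EuclideanSpace ℝ (Fin 2) =>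
      F (q 0) * Real.sin (2 * π * a * q 1))
      (F x • (Real.cos θ • ((2 * π * a) • P1)) +
        Real.sin θ • ((E * (D / 2) / (2 * π * a)) • P0)) p := hFcomp.mul hsin
  have h2 : HasFDerivAt (fun q : EuclideanSpace ℝ (Fin 2) =>
      F (q 0) * Real.cos (2 * π * a * q 1))
      (F x • ((-Real.sin θ) • ((2 * π * a) • P1)) +
        Real.cos θ • ((E * (D / 2) / (2 * π * a)) • P0)) p := hFcomp.mul hcos
  -- assemble
  set L : Fin 3 → (EuclideanSpace ℝ (Fin 2) →L[ℝ] ℝ) :=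
    ![(E * s) • P0,
      F x • (Real.cos θ • ((2 * π * a) • P1)) +
        Real.sin θ • ((E * (D / 2) / (2 * π * a)) • P0),
      F x • ((-Real.sin θ) • ((2 * π * a) • P1)) +
        Real.cos θ • ((E * (D / 2) / (2 * π * a)) • P0)] with hL
  have hG : HasFDerivAt (fun q : EuclideanSpace ℝ (Fin 2) =>
      (![X (q 0), F (q 0) * Real.sin (2 * π * a * q 1),
        F (q 0) * Real.cos (2 * π * a * q 1)] : Fin 3 → ℝ))
      (ContinuousLinearMap.pi L) p := by
    apply hasFDerivAt_pi''
    intro i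
    rw [ContinuousLinearMap.proj_pi]
    fin_cases i
    · simpa [hL] using h0
    · simpa [hL] using h1
    · simpa [hL] using h2
  set M := ((PiLp.continuousLinearEquiv 2 ℝ (fun _ : Fin 3 => ℝ)).symm.toContinuousLinearMap).comp
      (ContinuousLinearMap.pi L) with hM
  have hΦd : HasFDerivAt Φ M p := by
    have hfun : Φ = fun q => (PiLp.continuousLinearEquiv 2 ℝ (fun _ : Fin 3 => ℝ)).symm
        (![X (q 0), F (q 0) * Real.sin (2 * π * a * q 1),
          F (q 0) * Real.cos (2 * π * a * q 1)]) := by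
      funext q; rw [hΦ q]; rfl
    rw [hfun]
    exact ((PiLp.continuousLinearEquiv 2 ℝ (fun _ : Fin 3 => ℝ)).symm.hasFDerivAt).comp p hG
  refine ⟨hΦd.differentiableAt, ?_⟩
  intro v
  rw [hΦd.fderiv]
  have hMv : ∀ i : Fin 3, (M v) i = (L i) v := by
    intro i
    simp [hM]
  have hv : ‖v‖ = Real.sqrt (v 0 ^ 2 + v 1 ^ 2) := by
    rw [EuclideanSpace.norm_eq]
    simp [Fin.sum_univ_two, sq_abs]
  rw [EuclideanSpace.norm_eq, hv]
  simp only [Real.norm_eq_abs, sq_abs, Fin.sum_univ_three, hMv]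
  simp only [hL]
  simp only [ContinuousLinearMap.add_apply, ContinuousLinearMap.coe_smul', Pi.smul_apply, smul_eq_mul, Matrix.cons_val_zero, Matrix.cons_val_one, Matrix.head_cons, Matrix.cons_val_two, Matrix.tail_cons, hP0, hP1, PiLp.proj_apply]
  have hEpos : (0:ℝ) < E := Real.exp_pos _
  rw [show E * Real.sqrt (v 0 ^ 2 + v 1 ^ 2) = Real.sqrt (E ^ 2 * (v 0 ^ 2 + v 1 ^ 2)) by
    rw [Real.sqrt_mul (sq_nonneg E), Real.sqrt_sq hEpos.le]]
  congr 1
  have hs2 : s ^ 2 = 1 - D ^ 2 / (16 * π ^ 2 * a ^ 2) := Real.sq_sqrt (hsub x).le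
  have hcs : Real.sin θ ^ 2 + Real.cos θ ^ 2 = 1 := Real.sin_sq_add_cos_sq θ
  have ha' : a ≠ 0 := ha.ne'
  have hπ' : π ≠ 0 := hπ.ne'
  rw [hF x]
  field_simp
  rw [← hEdef]
  have hs2' : s ^ 2 * (16 * π ^ 2 * a ^ 2) = 16 * π ^ 2 * a ^ 2 - D ^ 2 := by
    rw [hs2]; field_simp
  linear_combination (E ^ 2 * v 0 ^ 2) * hs2' +
    (E ^ 2 * (16 * π ^ 2 * a ^ 2 * v 1 ^ 2 + D ^ 2 * v 0 ^ 2)) * hcs
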